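/- In the Dinkelbach iteration x^{k+1} ∈ argmin_{‖x‖_p = 1} ( r^k ‖x‖_∞ − I(x) ), r^{k+1} = F(x^{k+1}), starting from any x^0 ≠ 0 with r^0 = F(x^0), the sequence (r^k) is monotonically nondecreasing and bounded above by r_max = max_{x≠0} F(x). -/
import Mathlib


open Finset
open scoped ENNReal

noncomputable def Ifun {n : ℕ} (w : Fin n → Fin n → ℝ) (x : Fin n → ℝ) : ℝ :=
  (1 / 2) * ∑ i, ∑ j, w i j * |x i - x j|

/-- The `p`-norm on `ℝ^n`, `p ∈ [1,∞]` (`‖·‖` is the sup norm on `Fin n → ℝ`). -/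
noncomputable def pnorm {n : ℕ} (p : ℝ≥0∞) (x : Fin n → ℝ) : ℝ :=
  if p = ⊤ then ‖x‖ else (∑ i, |x i| ^ p.toReal) ^ (1 / p.toReal)

lemma pnorm_pos {n : ℕ} {p : ℝ≥0∞} (hp : 1 ≤ p) {x : Fin n → ℝ} (hx : x ≠ 0) :
    0 < pnorm p x := by
  unfold pnorm
  split
  · exact norm_pos_iff.mpr hx
  · have ht : 0 < p.toReal := ENNReal.toReal_pos (by positivity) (by assumption)
    obtain ⟨i, hi⟩ := Function.ne_iff.mp hx
    have hpos : 0 < ∑ j, |x j| ^ p.toReal := by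
      apply Finset.sum_pos' (fun j _ => by positivity)
      exact ⟨i, Finset.mem_univ i, Real.rpow_pos_of_pos (abs_pos.mpr hi) _⟩
    exact Real.rpow_pos_of_pos hpos _

lemma pnorm_smul {n : ℕ} {p : ℝ≥0∞} (hp : 1 ≤ p) (c : ℝ) (hc : 0 ≤ c) (x : Fin n → ℝ) :
    pnorm p (c • x) = c * pnorm p x := by
  unfold pnorm
  split
  · simp [norm_smul, abs_of_nonneg hc]
  · have ht : 0 < p.toReal := ENNReal.toReal_pos (by positivity) (by assumption)
    have h1 : ∀ i, |(c • x) i| ^ p.toReal = c ^ p.toReal * |x i| ^ p.toReal := by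
      intro i
      simp only [Pi.smul_apply, smul_eq_mul, abs_mul, abs_of_nonneg hc]
      exact Real.mul_rpow hc (abs_nonneg _)
    rw [Finset.sum_congr rfl (fun i _ => h1 i), ← Finset.mul_sum,
      Real.mul_rpow (by positivity) (Finset.sum_nonneg fun i _ => by positivity),
      ← Real.rpow_mul hc, mul_one_div, div_self ht.ne', Real.rpow_one]

lemma Ifun_smul {n : ℕ} (w : Fin n → Fin n → ℝ) (c : ℝ) (hc : 0 ≤ c) (x : Fin n → ℝ) :
    Ifun w (c • x) = c * Ifun w x := by
  unfold Ifun
  have h1 : ∀ i, ∑ j, w i j * |(c • x) i - (c • x) j|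
      = c * ∑ j, w i j * |x i - x j| := by
    intro i
    rw [Finset.mul_sum]
    apply Finset.sum_congr rfl
    intro j _
    simp only [Pi.smul_apply, smul_eq_mul, ← mul_sub, abs_mul, abs_of_nonneg hc]
    ring
  rw [Finset.sum_congr rfl (fun i _ => h1 i), ← Finset.mul_sum]
  ring

/-- Dinkelbach iteration: `(r^k)` is nondecreasing and bounded above by `max F`. -/
theorem stmt4 {n : ℕ} (w : Fin n → Fin n → ℝ)
    (hsym : ∀ i j, w i j = w j i) (hnn : ∀ i j, 0 ≤ w i j)
    (p : ℝ≥0∞) (hp : 1 ≤ p)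
    (x : ℕ → Fin n → ℝ) (r : ℕ → ℝ)
    (hx0 : x 0 ≠ 0)
    (hr : ∀ k, r k = Ifun w (x k) / ‖x k‖)
    (hmin : ∀ k, pnorm p (x (k + 1)) = 1 ∧
      ∀ y : Fin n → ℝ, pnorm p y = 1 →
        r k * ‖x (k + 1)‖ - Ifun w (x (k + 1)) ≤ r k * ‖y‖ - Ifun w y) :
    (∀ k, r k ≤ r (k + 1)) ∧
      ∀ k, r k ≤ sSup {c : ℝ | ∃ y : Fin n → ℝ, y ≠ 0 ∧ c = Ifun w y / ‖y‖} := by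
  have hxne : ∀ k, x k ≠ 0 := by
    intro k
    cases k with
    | zero => exact hx0
    | succ m =>
      intro h
      have h1 := (hmin m).1
      have h2 : pnorm p (x (m + 1)) > 0 → True := fun _ => trivial
      rw [h] at h1
      have : pnorm p (0 : Fin n → ℝ) = 0 := by
        have := pnorm_smul hp 0 le_rfl (0 : Fin n → ℝ)
        simpa using this
      rw [this] at h1
      norm_num at h1
  have hnormpos : ∀ k, 0 < ‖x k‖ := fun k => norm_pos_iff.mpr (hxne k)
  have hrmul : ∀ k, r k * ‖x k‖ = Ifun w (x k) := by
    intro k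
    rw [hr k, div_mul_cancel₀ _ (hnormpos k).ne']
  constructor
  · intro k
    have hpnpos : 0 < pnorm p (x k) := pnorm_pos hp (hxne k)
    set c := (pnorm p (x k))⁻¹ with hc
    have hcpos : 0 < c := inv_pos.mpr hpnpos
    have hy : pnorm p (c • x k) = 1 := by
      rw [pnorm_smul hp c hcpos.le, hc, inv_mul_cancel₀ hpnpos.ne']
    have hle := (hmin k).2 (c • x k) hy
    have hnorm : ‖c • x k‖ = c * ‖x k‖ := by
      rw [norm_smul, Real.norm_eq_abs, abs_of_nonneg hcpos.le]
    rw [hnorm, Ifun_smul w c hcpos.le] at hle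
    have hz : r k * (c * ‖x k‖) - c * Ifun w (x k) = 0 := by
      nlinarith [hrmul k]
    rw [hz] at hle
    have h1 : r k * ‖x (k + 1)‖ ≤ Ifun w (x (k + 1)) := by linarith
    rw [hr (k + 1)]
    exact (le_div_iff₀ (hnormpos (k + 1))).mpr h1
  · intro k
    have hmem : r k ∈ {c : ℝ | ∃ y : Fin n → ℝ, y ≠ 0 ∧ c = Ifun w y / ‖y‖} :=
      ⟨x k, hxne k, hr k⟩
    apply le_csSup _ hmem
    refine ⟨∑ i, ∑ j, w i j, ?_⟩
    rintro c ⟨y, hy, rfl⟩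
    have hyn : 0 < ‖y‖ := norm_pos_iff.mpr hy
    rw [Set.mem_setOf_eq] at *
    rw [div_le_iff₀ hyn]
    have hbd : ∀ i j, w i j * |y i - y j| ≤ w i j * (2 * ‖y‖) := by
      intro i j
      apply mul_le_mul_of_nonneg_left _ (hnn i j)
      calc |y i - y j| ≤ |y i| + |y j| := abs_sub _ _
        _ ≤ ‖y‖ + ‖y‖ := add_le_add (norm_le_pi_norm y i) (norm_le_pi_norm y j)
        _ = 2 * ‖y‖ := by ring
    calc Ifun w y ≤ (1 / 2) * ∑ i, ∑ j, w i j * (2 * ‖y‖) := by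
          unfold Ifun
          apply mul_le_mul_of_nonneg_left _ (by norm_num)
          exact Finset.sum_le_sum fun i _ => Finset.sum_le_sum fun j _ => hbd i j
      _ = (∑ i, ∑ j, w i j) * ‖y‖ := by
          simp only [← Finset.sum_mul]
          ring
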